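/- Let Γ be a finite group and M a Γ-lattice. Then M is invertible if and only if Ext^1_Γ(M, C) = 0 for every coflasque Γ-lattice C. -/

import Mathlib

/-! Basic definitions for Γ-lattices over a finite group Γ. -/

/-- A `Γ`-lattice: a finitely generated free `ℤ`-module equipped with a
`ℤ`-linear action of `Γ`, i.e. a `ℤ[Γ]`-module which is finitely generated
and free as a `ℤ`-module. -/
structure GammaLattice (Γ : Type) [Group Γ] where
  carrier : Type
  [isAddCommGroup : AddCommGroup carrier]
  [isModule : Module ℤ carrier]
  ρ : Representation ℤ Γ carrier
  free : Module.Free ℤ carrier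
  finite : Module.Finite ℤ carrier

attribute [instance] GammaLattice.isAddCommGroup GammaLattice.isModule

variable {Γ : Type} [Group Γ]

/-- A `ℤ`-linear map between `Γ`-representations is equivariant (i.e. is a
`ℤ[Γ]`-module homomorphism) if it commutes with the `Γ`-actions. -/
def IsEquivariantMap {M N : Type} [AddCommGroup M] [Module ℤ M]
    [AddCommGroup N] [Module ℤ N]
    (ρM : Representation ℤ Γ M) (ρN : Representation ℤ Γ N)
    (f : M →ₗ[ℤ] N) : Prop :=
  ∀ (γ : Γ) (m : M), f (ρM γ m) = ρN γ (f m)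

/-- A short exact sequence `0 → A → B → C → 0` of `ℤ[Γ]`-modules. -/
def IsShortExactSeq {A B C : Type} [AddCommGroup A] [Module ℤ A]
    [AddCommGroup B] [Module ℤ B] [AddCommGroup C] [Module ℤ C]
    (ρA : Representation ℤ Γ A) (ρB : Representation ℤ Γ B)
    (ρC : Representation ℤ Γ C)
    (f : A →ₗ[ℤ] B) (g : B →ₗ[ℤ] C) : Prop :=
  IsEquivariantMap ρA ρB f ∧ IsEquivariantMap ρB ρC g ∧
    Function.Injective f ∧ Function.Surjective g ∧
    LinearMap.range f = LinearMap.ker g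

/-- A `Γ`-lattice is a permutation lattice if it has a `ℤ`-basis permuted
by `Γ`. -/
def GammaLattice.IsPermutation (L : GammaLattice Γ) : Prop :=
  ∃ (ι : Type) (b : Module.Basis ι ℤ L.carrier),
    ∀ (γ : Γ) (i : ι), ∃ j : ι, L.ρ γ (b i) = b j

/-- A `Γ`-lattice is invertible if it is a direct summand of a permutation
`Γ`-lattice. -/
def GammaLattice.IsInvertible (L : GammaLattice Γ) : Prop :=
  ∃ N : GammaLattice Γ, N.IsPermutation ∧
    ∃ (i : L.carrier →ₗ[ℤ] N.carrier) (p : N.carrier →ₗ[ℤ] L.carrier),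
      IsEquivariantMap L.ρ N.ρ i ∧ IsEquivariantMap N.ρ L.ρ p ∧
        p.comp i = LinearMap.id

/-- A `Γ`-lattice is coflasque if `H¹(Γ', M) = 0` for every subgroup
`Γ' ≤ Γ`. -/
def GammaLattice.IsCoflasque (L : GammaLattice Γ) : Prop :=
  ∀ Γ' : Subgroup Γ,
    Subsingleton (groupCohomology.H1 (Rep.of (L.ρ.comp Γ'.subtype)))

/-- The dual lattice `M^∨ = Hom_ℤ(M, ℤ)` with the action
`(γ · f)(m) = f(γ⁻¹ · m)`. -/
noncomputable def GammaLattice.dual (L : GammaLattice Γ) : GammaLattice Γ where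
  carrier := Module.Dual ℤ L.carrier
  ρ := L.ρ.dual
  free := by have := L.free; have := L.finite; infer_instance
  finite := by have := L.free; have := L.finite; infer_instance

/-- A `Γ`-lattice is flasque if its dual is coflasque. -/
noncomputable def GammaLattice.IsFlasque (L : GammaLattice Γ) : Prop :=
  L.dual.IsCoflasque

/-- `Ext¹_Γ(A, B) = 0`, formulated as: every short exact sequence of
`ℤ[Γ]`-modules `0 → B → E → A → 0` splits (admits an equivariant section). -/
def Ext1Vanishes {A B : Type} [AddCommGroup A] [Module ℤ A]
    [AddCommGroup B] [Module ℤ B]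
    (ρA : Representation ℤ Γ A) (ρB : Representation ℤ Γ B) : Prop :=
  ∀ (E : Type) [AddCommGroup E] [Module ℤ E],
    ∀ (ρE : Representation ℤ Γ E) (ι : B →ₗ[ℤ] E) (π : E →ₗ[ℤ] A),
      IsShortExactSeq ρB ρE ρA ι π →
      ∃ s : A →ₗ[ℤ] E, IsEquivariantMap ρA ρE s ∧ π.comp s = LinearMap.id

/-- The direct sum (product) of two representations. -/
def prodRep {M N : Type} [AddCommGroup M] [Module ℤ M]
    [AddCommGroup N] [Module ℤ N]
    (ρM : Representation ℤ Γ M) (ρN : Representation ℤ Γ N) :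
    Representation ℤ Γ (M × N) where
  toFun γ := (ρM γ).prodMap (ρN γ)
  map_one' := by ext x <;> simp
  map_mul' g h := by ext x <;> simp [Module.End.mul_apply]


open groupCohomology in
lemma subsingleton_H1_iff {G : Type} [Group G] {V : Type} [AddCommGroup V] [Module ℤ V]
    (ρ : Representation ℤ G V) :
    Subsingleton (groupCohomology.H1 (Rep.of ρ)) ↔
      ∀ c : G → V, (∀ g h, c (g * h) = ρ g (c h) + c g) → ∃ x : V, ∀ g, c g = ρ g x - x := by
  set A := Rep.of ρ with hA
  constructor
  · intro h c hc
    have hmem : c ∈ cocycles₁ A := (mem_cocycles₁_iff _).2 hc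
    have hz : H1π A ⟨c, hmem⟩ = 0 := Subsingleton.elim _ _
    obtain ⟨x, hx⟩ := (H1π_eq_zero_iff _).1 hz
    exact ⟨x, fun g => (congrFun hx g).symm⟩
  · intro h
    refine subsingleton_of_forall_eq 0 fun y => ?_
    induction y using H1_induction_on with
    | h f =>
      rw [H1π_eq_zero_iff]
      obtain ⟨x, hx⟩ := h f ((mem_cocycles₁_iff _).1 f.2)
      exact ⟨x, funext fun g => (hx g).symm⟩

/-- The permutation representation on `X →₀ k`. -/
noncomputable def ofMulActionF (k G X : Type) [CommRing k] [Group G] [MulAction G X] :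
    Representation k G (X →₀ k) where
  toFun g := Finsupp.lmapDomain k k (g • ·)
  map_one' := by ext; simp
  map_mul' x y := by ext; simp [mul_smul, Finsupp.mapDomain_single]

theorem ofMulActionF_single {k G X : Type} [CommRing k] [Group G] [MulAction G X]
    (g : G) (x : X) (r : k) :
    ofMulActionF k G X g (Finsupp.single x r) = Finsupp.single (g • x) r := by
  simp [ofMulActionF, Finsupp.mapDomain_single]

theorem ofMulActionF_apply {k G X : Type} [CommRing k] [Group G] [MulAction G X]
    (g : G) (f : X →₀ k) (x : X) :
    ofMulActionF k G X g f x = f (g⁻¹ • x) := by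
  show Finsupp.mapDomain (g • ·) f x = f (g⁻¹ • x)
  rw [show x = g • (g⁻¹ • x) by simp, Finsupp.mapDomain_apply (MulAction.injective g)]
  simp

noncomputable def orbRep (G : Type) [Group G] (X : Type) [MulAction G X] (x : X) : X :=
  (Quotient.mk (MulAction.orbitRel G X) x).out

lemma orbRep_spec (G : Type) [Group G] (X : Type) [MulAction G X] (x : X) :
    ∃ g : G, g • orbRep G X x = x := by
  have h : (MulAction.orbitRel G X).r (orbRep G X x) x :=
    Quotient.exact (Quotient.out_eq _)
  rw [MulAction.orbitRel_apply, MulAction.mem_orbit_iff] at h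
  obtain ⟨g, hg⟩ := h
  exact ⟨g⁻¹, by rw [← hg]; simp⟩

lemma orbRep_smul (G : Type) [Group G] (X : Type) [MulAction G X] (g : G) (x : X) :
    orbRep G X (g • x) = orbRep G X x := by
  unfold orbRep
  congr 1
  exact Quotient.sound ⟨g, rfl⟩

noncomputable def orbGamma (G : Type) [Group G] (X : Type) [MulAction G X] (x : X) : G :=
  (orbRep_spec G X x).choose

lemma orbGamma_spec (G : Type) [Group G] (X : Type) [MulAction G X] (x : X) :
    orbGamma G X x • orbRep G X x = x :=
  (orbRep_spec G X x).choose_spec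

open Representation in
/-- Every 1-cocycle of a finite group with values in a permutation module `X →₀ ℤ`
(for `X` finite) is a coboundary. -/
lemma perm_cocycle_is_coboundary {G X : Type} [Group G] [Finite G] [MulAction G X]
    [Finite X] (c : G → X →₀ ℤ)
    (hc : ∀ g h : G, c (g * h) = ofMulActionF ℤ G X g (c h) + c g) :
    ∃ y : X →₀ ℤ, ∀ g : G, c g = ofMulActionF ℤ G X g y - y := by
  have hrel : ∀ (g h : G) (x : X), c (g * h) x = c h (g⁻¹ • x) + c g x := by
    intro g h x
    rw [hc g h]
    simp [ofMulActionF_apply]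
  have hone : ∀ x, c 1 x = 0 := by
    intro x
    have := hrel 1 1 x
    simp at this
    linarith [this]
  have hstab : ∀ (x₀ : X) (s : G), s • x₀ = x₀ → c s x₀ = 0 := by
    intro x₀ s hs
    have hpow : ∀ n : ℕ, c (s ^ n) x₀ = n * c s x₀ := by
      intro n
      induction n with
      | zero => simpa using hone x₀
      | succ n ih =>
        have h1 : c (s * s ^ n) x₀ = c (s ^ n) (s⁻¹ • x₀) + c s x₀ := hrel s (s ^ n) x₀
        have h2 : s⁻¹ • x₀ = x₀ := inv_smul_eq_iff.mpr hs.symm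
        rw [h2, ih] at h1
        rw [pow_succ', h1]; push_cast; ring
    have h3 := hpow (orderOf s)
    rw [pow_orderOf_eq_one, hone] at h3
    have h4 : 0 < orderOf s := orderOf_pos s
    have h5 : (orderOf s : ℤ) ≠ 0 := by exact_mod_cast h4.ne'
    exact (mul_eq_zero.1 h3.symm).resolve_left h5
  set r := orbRep G X with hr
  set γ := orbGamma G X with hγ
  haveI : Fintype X := Fintype.ofFinite X
  set b : X →₀ ℤ := Finsupp.equivFunOnFinite.symm (fun x => c (γ x) x) with hb
  have hbx : ∀ x, b x = c (γ x) x := fun x => rfl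
  have main : ∀ (g : G) (x : X), c g x = b x - b (g⁻¹ • x) := by
    intro g x
    have h1 : c (g * γ (g⁻¹ • x)) x = c (γ (g⁻¹ • x)) (g⁻¹ • x) + c g x :=
      hrel g (γ (g⁻¹ • x)) x
    set s := (γ x)⁻¹ * (g * γ (g⁻¹ • x)) with hsdef
    have hrx : r (g⁻¹ • x) = r x := orbRep_smul G X g⁻¹ x
    have e2 : (γ x)⁻¹ • x = r x := inv_smul_eq_iff.mpr (orbGamma_spec G X x).symm
    have hs : s • r x = r x := by
      have e1 : γ (g⁻¹ • x) • r x = g⁻¹ • x := by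
        rw [← hrx]; exact orbGamma_spec G X (g⁻¹ • x)
      rw [hsdef, mul_smul, mul_smul, e1, smul_inv_smul, e2]
    have h2 : c (γ x * s) x = c s ((γ x)⁻¹ • x) + c (γ x) x := hrel (γ x) s x
    rw [e2, hstab (r x) s hs] at h2
    have e3 : γ x * s = g * γ (g⁻¹ • x) := by
      rw [hsdef]; group
    rw [e3, h1] at h2
    have hb1 := hbx x
    have hb2 := hbx (g⁻¹ • x)
    linarith [h2]
  refine ⟨-b, fun g => ?_⟩
  ext x
  rw [Finsupp.sub_apply, ofMulActionF_apply, Finsupp.neg_apply, Finsupp.neg_apply]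
  linarith [main g x]

/-- Forward direction: invertible implies Ext¹ into coflasque lattices vanishes. -/
lemma forward_dir {Γ : Type} [Group Γ] [Finite Γ] (M : GammaLattice Γ)
    (hM : M.IsInvertible) (C : GammaLattice Γ) (hC : C.IsCoflasque) :
    Ext1Vanishes M.ρ C.ρ := by
  obtain ⟨N, ⟨ι, b, hb⟩, iM, pM, hiM, hpM, hpi⟩ := hM
  intro E _ _ ρE ιC πE hses
  obtain ⟨hιeq, hπeq, hιinj, hπsurj, hrange⟩ := hses
  choose σ hσ using fun (γ : Γ) (i : ι) => hb γ i
  have binj := b.injective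
  have hσ1 : ∀ i, σ 1 i = i := fun i => binj (by rw [← hσ]; simp)
  have hσmul : ∀ g h i, σ (g * h) i = σ g (σ h i) := by
    intro g h i
    apply binj
    rw [← hσ, ← hσ, ← hσ, map_mul]
    rfl
  letI : MulAction Γ ι :=
    { smul := σ
      one_smul := hσ1
      mul_smul := hσmul }
  have hsmul : ∀ (g : Γ) (i : ι), g • i = σ g i := fun _ _ => rfl
  have hkerπ : ∀ x : C.carrier, πE (ιC x) = 0 := by
    intro x
    have : ιC x ∈ LinearMap.ker πE := hrange ▸ LinearMap.mem_range_self ιC x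
    exact this
  -- per-point invariant lifts
  have lifts : ∀ i₀ : ι, ∃ e : E, πE e = pM (b i₀) ∧
      ∀ g : Γ, σ g i₀ = i₀ → ρE g e = e := by
    intro i₀
    obtain ⟨e₀, he₀⟩ := hπsurj (pM (b i₀))
    set Γ' := MulAction.stabilizer Γ i₀ with hΓ'
    have hker : ∀ g : Γ', ∃ x : C.carrier, ιC x = ρE g e₀ - e₀ := by
      rintro ⟨g, hg⟩
      have hgσ : σ g i₀ = i₀ := hg
      have hmem : ρE g e₀ - e₀ ∈ LinearMap.ker πE := by
        rw [LinearMap.mem_ker, map_sub, hπeq, he₀, sub_eq_zero, ← hpM, hσ, hgσ]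
      rw [← hrange] at hmem
      obtain ⟨x, hx⟩ := hmem
      exact ⟨x, hx⟩
    choose cval hcval using hker
    have hcoc : ∀ g h : Γ', cval (g * h) = (C.ρ.comp Γ'.subtype) g (cval h) + cval g := by
      intro g h
      apply hιinj
      have h4 : ιC ((C.ρ.comp Γ'.subtype) g (cval h)) = ρE (g : Γ) (ιC (cval h)) :=
        hιeq (g : Γ) (cval h)
      rw [map_add, h4, hcval, hcval, hcval]
      have hm : ρE ((g : Γ) * (h : Γ)) = ρE (g : Γ) * ρE (h : Γ) := map_mul _ _ _
      show ρE ((g * h : Γ') : Γ) e₀ - e₀ = _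
      push_cast
      rw [hm]
      simp only [Module.End.mul_apply, map_sub]
      abel
    obtain ⟨x, hx⟩ := (subsingleton_H1_iff (C.ρ.comp Γ'.subtype)).1 (hC Γ') cval hcoc
    refine ⟨e₀ - ιC x, by rw [map_sub, he₀, hkerπ, sub_zero], ?_⟩
    intro g hg
    have hgm : g ∈ Γ' := hg
    have h2 : ρE g e₀ - e₀ = ρE g (ιC x) - ιC x := by
      rw [← hcval ⟨g, hgm⟩, hx ⟨g, hgm⟩, map_sub, ← hιeq g x]
      rfl
    rw [map_sub]
    exact sub_eq_sub_iff_sub_eq_sub.mpr h2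
  -- choose the invariant lifts and build the section on the basis
  choose eo heo1 heo2 using lifts
  set r := orbRep Γ ι with hrdef
  set γf := orbGamma Γ ι with hγdef
  set v : ι → E := fun i => ρE (γf i) (eo (r i)) with hvdef
  have hπv : ∀ i, πE (v i) = pM (b i) := by
    intro i
    rw [hvdef]
    show πE (ρE (γf i) (eo (r i))) = pM (b i)
    rw [hπeq, heo1, ← hpM, hσ]
    have : σ (γf i) (r i) = i := orbGamma_spec Γ ι i
    rw [this]
  have hveq : ∀ (g : Γ) (i : ι), v (σ g i) = ρE g (v i) := by
    intro g i
    have hσgi : σ g i = g • i := rfl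
    have hri : r (g • i) = r i := orbRep_smul Γ ι g i
    set s := (γf (g • i))⁻¹ * (g * γf i) with hsdef
    have hs : σ s (r i) = r i := by
      show s • r i = r i
      have e1 : γf i • r i = i := orbGamma_spec Γ ι i
      have e2 : γf (g • i) • r (g • i) = g • i := orbGamma_spec Γ ι (g • i)
      rw [hsdef, mul_smul, mul_smul, e1]
      rw [hri] at e2
      exact inv_smul_eq_iff.mpr e2.symm
    have heinv : ρE s (eo (r i)) = eo (r i) := heo2 (r i) s hs
    have : ρE (γf (g • i)) (ρE s (eo (r i))) = ρE g (ρE (γf i) (eo (r i))) := by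
      rw [heinv]
      have hmul : γf (g • i) * s = g * γf i := by rw [hsdef]; group
      have h5 : ρE (γf (g • i) * s) = ρE (γf (g • i)) * ρE s := map_mul _ _ _
      have h6 : ρE (g * γf i) = ρE g * ρE (γf i) := map_mul _ _ _
      have := congrArg (fun φ => φ (eo (r i))) (h5.symm.trans (by rw [hmul, h6]))
      simpa [Module.End.mul_apply, heinv] using this
    rw [hσgi]
    show ρE (γf (g • i)) (eo (r (g • i))) = ρE g (ρE (γf i) (eo (r i)))
    rw [hri, ← this, heinv]
  set s₀ : N.carrier →ₗ[ℤ] E := b.constr ℕ v with hs₀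
  have hs₀b : ∀ i, s₀ (b i) = v i := fun i => b.constr_basis ℕ v i
  have hs₀eq : IsEquivariantMap N.ρ ρE s₀ := by
    intro g n
    have : s₀ ∘ₗ (N.ρ g) = (ρE g) ∘ₗ s₀ := by
      apply b.ext
      intro i
      simp only [LinearMap.coe_comp, Function.comp_apply]
      rw [hσ, hs₀b, hs₀b, hveq]
    exact congrArg (fun φ => φ n) this
  have hπs₀ : πE ∘ₗ s₀ = pM := by
    apply b.ext
    intro i
    simp only [LinearMap.coe_comp, Function.comp_apply]
    rw [hs₀b, hπv]
  refine ⟨s₀ ∘ₗ iM, ?_, ?_⟩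
  · intro g m
    simp only [LinearMap.coe_comp, Function.comp_apply]
    rw [hiM, hs₀eq]
  · rw [← LinearMap.comp_assoc, hπs₀, hpi]

set_option maxHeartbeats 1000000 in
set_option synthInstance.maxHeartbeats 400000 in
/-- Backward direction: if Ext¹ into every coflasque lattice vanishes, M is invertible. -/
lemma backward_dir {Γ : Type} [Group Γ] [Finite Γ] (M : GammaLattice Γ)
    (h : ∀ C : GammaLattice Γ, C.IsCoflasque → Ext1Vanishes M.ρ C.ρ) :
    M.IsInvertible := by
  classical
  -- invariants of a subgroup
  set inv : Subgroup Γ → Submodule ℤ M.carrier :=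
    fun H => Representation.invariants (M.ρ.comp H.subtype) with hinv
  have hinvmem : ∀ (H : Subgroup Γ) (m : M.carrier),
      m ∈ inv H ↔ ∀ g : H, M.ρ (g : Γ) m = m := by
    intro H m
    rw [hinv]
    exact Representation.mem_invariants _ m
  -- finite generating sets for the invariants
  haveI := M.free
  haveI := M.finite
  haveI : IsNoetherian ℤ M.carrier := isNoetherian_of_isNoetherianRing_of_finite ℤ M.carrier
  have hfg : ∀ H : Subgroup Γ, ∃ s : Finset M.carrier, Submodule.span ℤ ↑s = inv H :=
    fun H => (IsNoetherian.noetherian (inv H)).imp fun _ hs => hs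
  choose gens hgens using hfg
  have hgensmem : ∀ (H : Subgroup Γ) (k : M.carrier), k ∈ gens H → k ∈ inv H := by
    intro H k hk
    rw [← hgens H]
    exact Submodule.subset_span hk
  -- the index type of the permutation module
  set ι : Type := Σ H : Subgroup Γ, (↥(gens H) × (Γ ⧸ H)) with hι
  haveI : Finite ι := by
    rw [hι]; infer_instance
  letI : MulAction Γ ι :=
    { smul := fun γ x => ⟨x.1, x.2.1, γ • x.2.2⟩
      one_smul := by
        rintro ⟨H, k, q⟩
        show (⟨H, k, (1 : Γ) • q⟩ : ι) = ⟨H, k, q⟩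
        rw [one_smul]
      mul_smul := by
        rintro γ δ ⟨H, k, q⟩
        show (⟨H, k, (γ * δ) • q⟩ : ι) = ⟨H, k, γ • δ • q⟩
        rw [mul_smul] }
  have hsmul : ∀ (γ : Γ) (H : Subgroup Γ) (k : ↥(gens H)) (q : Γ ⧸ H),
      γ • (⟨H, k, q⟩ : ι) = ⟨H, k, γ • q⟩ := fun _ _ _ _ => rfl
  set ρP : Representation ℤ Γ (ι →₀ ℤ) := ofMulActionF ℤ Γ ι with hρP
  -- the evaluation map
  have hval : ∀ (H : Subgroup Γ) (k : ↥(gens H)) (a b : Γ),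
      (QuotientGroup.leftRel H) a b → M.ρ a (k : M.carrier) = M.ρ b (k : M.carrier) := by
    intro H k a b hab
    rw [QuotientGroup.leftRel_apply] at hab
    have h1 : M.ρ (a⁻¹ * b) (k : M.carrier) = (k : M.carrier) :=
      (hinvmem H _).1 (hgensmem H _ k.2) ⟨a⁻¹ * b, hab⟩
    have : M.ρ b (k : M.carrier) = M.ρ a (M.ρ (a⁻¹ * b) (k : M.carrier)) := by
      rw [← Module.End.mul_apply, ← map_mul]
      group
    rw [this, h1]
  set val : ι → M.carrier := fun x =>
    Quotient.liftOn' x.2.2 (fun a => M.ρ a (x.2.1 : M.carrier)) (hval x.1 x.2.1) with hvaldef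
  have hvalmk : ∀ (H : Subgroup Γ) (k : ↥(gens H)) (a : Γ),
      val ⟨H, k, QuotientGroup.mk a⟩ = M.ρ a (k : M.carrier) := fun _ _ _ => rfl
  have hvalsmul : ∀ (γ : Γ) (x : ι), val (γ • x) = M.ρ γ (val x) := by
    rintro γ ⟨H, k, q⟩
    induction q using Quotient.inductionOn' with
    | h a =>
      have : γ • (QuotientGroup.mk a : Γ ⧸ H) = QuotientGroup.mk (γ * a) := rfl
      rw [hsmul, this, hvalmk, hvalmk, map_mul]
      rfl
  set π : (ι →₀ ℤ) →ₗ[ℤ] M.carrier := Finsupp.linearCombination ℤ val with hπ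
  have hπsingle : ∀ x : ι, π (Finsupp.single x 1) = val x := by
    intro x
    rw [hπ, Finsupp.linearCombination_single]
    exact @one_smul _ _ _ M.isModule.toMulAction _
  have hπeq : IsEquivariantMap ρP M.ρ π := by
    intro γ f
    induction f using Finsupp.induction_linear with
    | zero => simp
    | add f g hf hg => simp only [map_add, hf, hg]
    | single x n =>
      have h1 : ρP γ (Finsupp.single x n) = Finsupp.single (γ • x) n := by
        rw [hρP]; exact ofMulActionF_single γ x n
      rw [h1, hπ]
      rw [Finsupp.linearCombination_single, Finsupp.linearCombination_single]
      rw [hvalsmul, LinearMap.map_smul]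
  have hπsurj : Function.Surjective π := by
    intro m
    have hmem : m ∈ inv ⊥ := by
      rw [hinvmem]
      intro g
      have hg1 : (g : Γ) = 1 := g.2
      rw [show M.ρ (g : Γ) = M.ρ 1 from congrArg _ hg1, map_one]
      rfl
    rw [← hgens ⊥] at hmem
    have hle : Submodule.span ℤ ↑(gens ⊥) ≤ LinearMap.range π := by
      rw [Submodule.span_le]
      intro k hk
      refine ⟨Finsupp.single ⟨⊥, ⟨k, hk⟩, QuotientGroup.mk 1⟩ 1, ?_⟩
      rw [hπsingle, hvalmk, map_one]
      rfl
    exact hle hmem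
  -- the kernel as a lattice
  have hmapsker : ∀ γ : Γ, ∀ x ∈ LinearMap.ker π, ρP γ x ∈ LinearMap.ker π := by
    intro γ x hx
    rw [LinearMap.mem_ker] at hx ⊢
    rw [hπeq, hx, map_zero]
  set ρK : Representation ℤ Γ ↥(LinearMap.ker π) :=
    { toFun := fun γ => (ρP γ).restrict (hmapsker γ)
      map_one' := LinearMap.ext fun x => Subtype.ext (by
        show ρP 1 (x : ι →₀ ℤ) = (x : ι →₀ ℤ)
        rw [map_one]; rfl)
      map_mul' := fun γ δ => LinearMap.ext fun x => Subtype.ext (by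
        show ρP (γ * δ) (x : ι →₀ ℤ) = ρP γ (ρP δ (x : ι →₀ ℤ))
        rw [map_mul]; rfl) } with hρK
  have hρKval : ∀ (γ : Γ) (x : ↥(LinearMap.ker π)),
      ((ρK γ x : ↥(LinearMap.ker π)) : ι →₀ ℤ) = ρP γ (x : ι →₀ ℤ) := fun _ _ => rfl
  obtain ⟨n, bK⟩ := Submodule.basisOfPid (Finsupp.basisSingleOne : Module.Basis ι ℤ (ι →₀ ℤ))
    (LinearMap.ker π)
  set K : GammaLattice Γ :=
    { carrier := ↥(LinearMap.ker π)
      ρ := ρK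
      free := Module.Free.of_basis bK
      finite := Module.Finite.of_basis bK } with hK
  -- K is coflasque
  have hKco : K.IsCoflasque := by
    intro Γ'
    rw [show K.ρ = ρK from rfl]
    rw [subsingleton_H1_iff]
    intro c hc
    set c' : ↥Γ' → (ι →₀ ℤ) := fun g => ((c g : ↥(LinearMap.ker π)) : ι →₀ ℤ) with hc'
    have hc'coc : ∀ g h : ↥Γ',
        c' (g * h) = ofMulActionF ℤ ↥Γ' ι g (c' h) + c' g := by
      intro g h
      have := congrArg (fun z : ↥(LinearMap.ker π) => (z : ι →₀ ℤ)) (hc g h)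
      exact this.trans rfl
    obtain ⟨y, hy⟩ := perm_cocycle_is_coboundary c' hc'coc
    -- π y is an invariant of Γ'
    have hyinv : π y ∈ inv Γ' := by
      rw [hinvmem]
      intro g
      have h1 : π (c' g) = 0 := (c g).2
      rw [hy g] at h1
      have h2 : ofMulActionF ℤ (↥Γ') ι g y = ρP (g : Γ) y := rfl
      rw [map_sub, h2, hπeq] at h1
      rw [sub_eq_zero] at h1
      exact h1
    -- lift to an invariant element of P
    have hsub : inv Γ' ≤
        Submodule.map π (Representation.invariants (ρP.comp Γ'.subtype)) := by
      rw [← hgens Γ', Submodule.span_le]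
      intro k hk
      refine ⟨Finsupp.single ⟨Γ', ⟨k, hk⟩, QuotientGroup.mk 1⟩ 1, ?_, ?_⟩
      · refine (Representation.mem_invariants (ρ := ρP.comp Γ'.subtype) _).2 ?_
        intro g
        show ρP ((g : Γ)) _ = _
        have hq1 : (g : Γ) • (QuotientGroup.mk 1 : Γ ⧸ Γ') = QuotientGroup.mk 1 := by
          show QuotientGroup.mk ((g : Γ) * 1) = QuotientGroup.mk 1
          rw [QuotientGroup.eq]
          simpa using g.2
        rw [hρP, ofMulActionF_single, hsmul, hq1]
      · rw [hπsingle, hvalmk, map_one]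
        rfl
    obtain ⟨q, hqinv, hqval⟩ := hsub hyinv
    have hqinv' : ∀ g : ↥Γ', ρP (g : Γ) q = q :=
      (Representation.mem_invariants (ρ := ρP.comp Γ'.subtype) q).1 hqinv
    have hyq : y - q ∈ LinearMap.ker π := by
      rw [LinearMap.mem_ker, map_sub, hqval, sub_self]
    refine ⟨⟨y - q, hyq⟩, ?_⟩
    intro g
    apply Subtype.ext
    show c' g = _
    rw [hy g]
    have h2 : ofMulActionF ℤ (↥Γ') ι g y = ρP (g : Γ) y := rfl
    have h3 : (((ρK.comp Γ'.subtype) g ⟨y - q, hyq⟩ - ⟨y - q, hyq⟩ :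
        ↥(LinearMap.ker π)) : ι →₀ ℤ) = ρP (g : Γ) (y - q) - (y - q) := rfl
    rw [h3, h2, map_sub, hqinv' g]
    abel
  -- apply the hypothesis to the short exact sequence 0 → K → P → M → 0
  have hses : IsShortExactSeq ρK ρP M.ρ (LinearMap.ker π).subtype π := by
    refine ⟨fun γ x => rfl, hπeq, Submodule.injective_subtype _, hπsurj, ?_⟩
    exact Submodule.range_subtype _
  obtain ⟨s, hseq, hssec⟩ := h K hKco (ι →₀ ℤ) ρP (LinearMap.ker π).subtype π hses
  -- P as a permutation lattice
  refine ⟨{ carrier := ι →₀ ℤ, ρ := ρP,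
            free := inferInstance, finite := inferInstance }, ?_, s, π, hseq, hπeq, hssec⟩
  refine ⟨ι, Finsupp.basisSingleOne, ?_⟩
  intro γ i
  refine ⟨γ • i, ?_⟩
  show ρP γ (Finsupp.single i 1) = Finsupp.single (γ • i) 1
  rw [hρP]
  exact ofMulActionF_single γ i 1

/-- A Γ-lattice `M` is invertible if and only if
`Ext¹_Γ(M, C) = 0` for every coflasque Γ-lattice `C`. -/
theorem invertible_iff_ext1_into_coflasque_vanishes
    {Γ : Type} [Group Γ] [Finite Γ] (M : GammaLattice Γ) :
    M.IsInvertible ↔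
      ∀ C : GammaLattice Γ, C.IsCoflasque → Ext1Vanishes M.ρ C.ρ :=
  ⟨fun hM C hC => forward_dir M hM C hC, fun hh => backward_dir M hh⟩
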